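/- Let B ∈ ℝ^{m×n} with ‖B‖₂ ≤ M_max, let U_k ∈ ℝ^{n×k} have orthonormal columns, and suppose the RIP (1−δ)‖x‖₂² ≤ s^{-1}‖Bx‖₂² holds for all x ∈ span(U_k), with 0 < δ < 1. Let x ∈ span(U_k) with ‖Q x − x‖₂ ≤ ε‖x‖₂ where Q is an orthogonal projection matrix (Q = QᵀQ = Q²). Let v ∈ ℝ^n be arbitrary and write v = α + β with α = U_kU_kᵀ v and β = (I − U_kU_kᵀ) v. Then ‖B v − B Q x‖₂ ≥ √(s(1−δ))·‖α − x‖₂ − M_max‖β‖₂ − ε·M_max·‖x‖₂. -/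

import Mathlib

open Matrix Finset

/-- Spectral (ℓ2 operator) norm of a real matrix. -/
noncomputable def specNorm {m n : ℕ} (A : Matrix (Fin m) (Fin n) ℝ) : ℝ :=
  ‖LinearMap.toContinuousLinearMap (Matrix.toEuclideanLin A)‖

/-- Euclidean (ℓ2) norm of a vector. -/
noncomputable def vnorm {ι : Type*} [Fintype ι] (v : ι → ℝ) : ℝ :=
  Real.sqrt (∑ i, v i ^ 2)

lemma vnorm_eq {ι : Type*} [Fintype ι] (v : ι → ℝ) :
    vnorm v = ‖(WithLp.equiv 2 (ι → ℝ)).symm v‖ := by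
  rw [EuclideanSpace.norm_eq, vnorm]
  congr 1
  refine Finset.sum_congr rfl fun i _ => ?_
  simp [sq_abs]

lemma vnorm_nonneg {ι : Type*} [Fintype ι] (v : ι → ℝ) : 0 ≤ vnorm v :=
  Real.sqrt_nonneg _

lemma vnorm_add_le {ι : Type*} [Fintype ι] (a b : ι → ℝ) :
    vnorm (a + b) ≤ vnorm a + vnorm b := by
  simp only [vnorm_eq, WithLp.equiv_symm_apply, WithLp.toLp_add]
  exact norm_add_le _ _

lemma vnorm_neg {ι : Type*} [Fintype ι] (a : ι → ℝ) : vnorm (-a) = vnorm a := by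
  simp only [vnorm_eq, WithLp.equiv_symm_apply, WithLp.toLp_neg, norm_neg]

lemma vnorm_mulVec_le {m n : ℕ} (A : Matrix (Fin m) (Fin n) ℝ) (v : Fin n → ℝ) :
    vnorm (A.mulVec v) ≤ specNorm A * vnorm v := by
  rw [vnorm_eq, vnorm_eq, WithLp.equiv_symm_apply, WithLp.equiv_symm_apply, ← Matrix.toEuclideanLin_apply_piLp_toLp, specNorm]
  exact (LinearMap.toContinuousLinearMap (Matrix.toEuclideanLin A)).le_opNorm _

lemma vnorm_dotProduct {n : ℕ} (v : Fin n → ℝ) : v ⬝ᵥ v = vnorm v ^ 2 := by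
  rw [vnorm, Real.sq_sqrt (by positivity)]
  simp [dotProduct, sq]

theorem stmt18 {m n k : ℕ} (B : Matrix (Fin m) (Fin n) ℝ)
    (Uk : Matrix (Fin n) (Fin k) ℝ) (hUk : Ukᵀ * Uk = 1)
    (Mmax s δ ε : ℝ) (hδ0 : 0 < δ) (hδ1 : δ < 1) (hs : 0 < s) (hε : 0 ≤ ε)
    (hB : specNorm B ≤ Mmax)
    (hRIP : ∀ x : Fin n → ℝ, (∃ c : Fin k → ℝ, x = Uk.mulVec c) →
      (1 - δ) * (x ⬝ᵥ x) ≤ s⁻¹ * (B.mulVec x ⬝ᵥ B.mulVec x))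
    (Q : Matrix (Fin n) (Fin n) ℝ) (hQsym : Qᵀ = Q) (hQproj : Q * Q = Q)
    (x : Fin n → ℝ) (hx : ∃ c : Fin k → ℝ, x = Uk.mulVec c)
    (hxc : vnorm (Q.mulVec x - x) ≤ ε * vnorm x)
    (v : Fin n → ℝ) :
    Real.sqrt (s * (1 - δ)) * vnorm ((Uk * Ukᵀ).mulVec v - x)
        - Mmax * vnorm (v - (Uk * Ukᵀ).mulVec v) - ε * Mmax * vnorm x
      ≤ vnorm (B.mulVec v - B.mulVec (Q.mulVec x)) := by
  have hM : 0 ≤ Mmax := le_trans (norm_nonneg _) hB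
  set α : Fin n → ℝ := (Uk * Ukᵀ).mulVec v with hα
  obtain ⟨c, hc⟩ := hx
  have hspan : ∃ c' : Fin k → ℝ, α - x = Uk.mulVec c' := by
    refine ⟨Ukᵀ.mulVec v - c, ?_⟩
    rw [Matrix.mulVec_sub, hα, ← Matrix.mulVec_mulVec, hc]
  -- RIP consequence
  have h1 : Real.sqrt (s * (1 - δ)) * vnorm (α - x) ≤ vnorm (B.mulVec (α - x)) := by
    have hr := hRIP (α - x) hspan
    rw [vnorm_dotProduct, vnorm_dotProduct] at hr
    have hsd : (0:ℝ) ≤ s * (1 - δ) := by nlinarith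
    nlinarith [Real.sq_sqrt hsd, Real.sqrt_nonneg (s * (1 - δ)),
      vnorm_nonneg (α - x), vnorm_nonneg (B.mulVec (α - x)),
      mul_le_mul_of_nonneg_left hr hs.le, mul_inv_cancel₀ hs.ne']
  have h2 : vnorm (B.mulVec (v - α)) ≤ Mmax * vnorm (v - α) :=
    le_trans (vnorm_mulVec_le B _) (mul_le_mul_of_nonneg_right hB (vnorm_nonneg _))
  have h3 : vnorm (B.mulVec (x - Q.mulVec x)) ≤ ε * Mmax * vnorm x := by
    have heq : vnorm (x - Q.mulVec x) = vnorm (Q.mulVec x - x) := by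
      rw [show x - Q.mulVec x = -(Q.mulVec x - x) by ring, vnorm_neg]
    calc vnorm (B.mulVec (x - Q.mulVec x)) ≤ specNorm B * vnorm (x - Q.mulVec x) :=
          vnorm_mulVec_le B _
      _ ≤ Mmax * (ε * vnorm x) := by
          rw [heq]; exact mul_le_mul hB hxc (vnorm_nonneg _) hM
      _ = ε * Mmax * vnorm x := by ring
  -- decomposition
  have hdec : B.mulVec (α - x)
      = (B.mulVec v - B.mulVec (Q.mulVec x)) + -(B.mulVec (v - α)) + -(B.mulVec (x - Q.mulVec x)) := by
    rw [Matrix.mulVec_sub, Matrix.mulVec_sub, Matrix.mulVec_sub]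
    ring_nf
  have htri : vnorm (B.mulVec (α - x))
      ≤ vnorm (B.mulVec v - B.mulVec (Q.mulVec x)) + vnorm (B.mulVec (v - α))
        + vnorm (B.mulVec (x - Q.mulVec x)) := by
    rw [hdec]
    calc vnorm (_ + _ + _) ≤ vnorm (_ + _) + vnorm (-(B.mulVec (x - Q.mulVec x))) :=
          vnorm_add_le _ _
      _ ≤ vnorm (B.mulVec v - B.mulVec (Q.mulVec x)) + vnorm (-(B.mulVec (v - α)))
            + vnorm (-(B.mulVec (x - Q.mulVec x))) :=
          add_le_add_left (vnorm_add_le _ _) _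
      _ = _ := by rw [vnorm_neg, vnorm_neg]
  linarith
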